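/- arXiv:math/0207203 — 5 statements merged into one kernel-verified Lean document; each statement's English description precedes it below -/
import Mathlib

section
/- Let p, q be coprime positive integers with p > q, and let q/p = [a_0, a_1, ..., a_n] be the (unique) continued fraction expansion with a_0 ≥ 0, a_i > 0 for 1 ≤ i ≤ n, and a_n > 1. If n is odd, then (pq-1)/p^2 = [a_0, a_1, ..., a_{n-1}, a_n+1, a_n-1, a_{n-1}, a_{n-2}, ..., a_2, a_1]; if n is even, then (pq-1)/p^2 = [a_0, a_1, ..., a_{n-1}, a_n-1, a_n+1, a_{n-1}, a_{n-2}, ..., a_2, a_1]. -/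
/-- Continued fraction value: `cf [a₀, a₁, ..., aₙ] = a₀ + 1/(a₁ + 1/(... + 1/aₙ))`. -/
def cf : List ℤ → ℚ
  | [] => 0
  | [a] => (a : ℚ)
  | a :: l => (a : ℚ) + (cf l)⁻¹

/-- Auxiliary for the Bredon–Wood sum: carries previous `a`, previous `b`,
and the partial sum of the `b`'s. -/
def NsumAux : ℤ → ℤ → ℤ → List ℤ → ℤ
  | _, _, s, [] => s
  | pa, pb, s, a :: l =>
      NsumAux a (if pb = pa ∧ Even s then 0 else a)
        (s + (if pb = pa ∧ Even s then 0 else a)) l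

/-- `Nsum [a₀,...,aₙ] = b₀ + ... + bₙ` where `b₀ = a₀` and
`bᵢ = 0` if `bᵢ₋₁ = aᵢ₋₁` and `b₀ + ... + bᵢ₋₁` is even, else `bᵢ = aᵢ`.
The Bredon–Wood invariant is `N(x,y) = Nsum l / 2` for `l` the continued
fraction expansion of `x/y`. -/
def Nsum : List ℤ → ℤ
  | [] => 0
  | a :: l => NsumAux a a a l

/-- A valid continued fraction expansion: nonempty, `a₀ ≥ 0`,
`aᵢ > 0` for `i ≥ 1`, and the last term `> 1`. -/
def ValidCF (l : List ℤ) : Prop :=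
  l ≠ [] ∧ 0 ≤ l.headI ∧ (∀ a ∈ l.tail, 0 < a) ∧ 1 < l.getLast!

namespace CW
open Matrix

def M : List ℤ → Matrix (Fin 2) (Fin 2) ℤ
  | [] => 1
  | a :: l => !![a,1;1,0] * M l

lemma M_nil : M [] = 1 := rfl
lemma M_cons (a : ℤ) (l : List ℤ) : M (a::l) = !![a,1;1,0] * M l := rfl

lemma M_append (l m : List ℤ) : M (l ++ m) = M l * M m := by
  induction l with
  | nil => simp [M_nil]
  | cons a l ih => simp [M_cons, ih, Matrix.mul_assoc]

lemma transp (a b c d : ℤ) : (!![a,b;c,d])ᵀ = !![a,c;b,d] := by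
  ext i j; fin_cases i <;> fin_cases j <;> rfl

lemma M_reverse (l : List ℤ) : M l.reverse = (M l)ᵀ := by
  induction l with
  | nil => simp [M_nil]
  | cons a l ih =>
      rw [List.reverse_cons, M_append, ih, M_cons a [], M_nil, mul_one,
        M_cons a l, Matrix.transpose_mul, transp]

lemma M_det (l : List ℤ) : (M l).det = (-1) ^ l.length := by
  induction l with
  | nil => simp [M_nil]
  | cons a l ih =>
      rw [M_cons, Matrix.det_mul, ih, List.length_cons, Matrix.det_fin_two_of]
      ring

lemma M_entries (a : ℤ) (B : Matrix (Fin 2) (Fin 2) ℤ) :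
    !![a,1;1,0] * B = !![a * B 0 0 + B 1 0, a * B 0 1 + B 1 1; B 0 0, B 0 1] := by
  rw [Matrix.eta_fin_two B, Matrix.mul_fin_two]
  norm_num

lemma M_pos (l : List ℤ) (hne : l ≠ []) (hpos : ∀ x ∈ l, 0 < x) :
    0 < M l 0 0 ∧ 0 < M l 1 0 ∧ 0 ≤ M l 0 1 ∧ 0 ≤ M l 1 1 := by
  induction l with
  | nil => simp at hne
  | cons a l ih =>
      have ha : 0 < a := hpos a (by simp)
      cases l with
      | nil =>
          rw [M_cons, M_nil, mul_one]
          norm_num [ha]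
      | cons c t =>
          obtain ⟨h1, h2, h3, h4⟩ := ih (by simp) (fun x hx => hpos x (by simp [hx]))
          rw [M_cons, M_entries]
          refine ⟨?_, ?_, ?_, ?_⟩ <;> simp <;> nlinarith

lemma cf_cons (a : ℤ) (l : List ℤ) (h : l ≠ []) : cf (a :: l) = (a:ℚ) + (cf l)⁻¹ := by
  cases l with
  | nil => simp at h
  | cons c t => rfl

lemma cf_M (l : List ℤ) (hpos : ∀ x ∈ l, 0 < x) (hne : l ≠ []) :
    cf l = (M l 0 0 : ℚ) / (M l 1 0 : ℚ) := by
  induction l with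
  | nil => simp at hne
  | cons a l ih =>
      cases l with
      | nil => rw [M_cons, M_nil, mul_one]; norm_num [cf]
      | cons c t =>
          have hp' : ∀ x ∈ c :: t, 0 < x := fun x hx => hpos x (by simp [hx])
          obtain ⟨h1, h2, _, _⟩ := M_pos (c::t) (by simp) hp'
          have h1' : (0:ℚ) < (M (c::t) 0 0 : ℚ) := by exact_mod_cast h1
          have hM : M (a :: c :: t) = !![a * M (c::t) 0 0 + M (c::t) 1 0,
              a * M (c::t) 0 1 + M (c::t) 1 1; M (c::t) 0 0, M (c::t) 0 1] := by
            rw [M_cons a (c::t), M_entries]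
          rw [cf_cons a _ (by simp), ih hp' (by simp), hM, inv_div]
          simp only [Matrix.cons_val_zero, Matrix.cons_val_one, Matrix.head_cons,
            Matrix.of_apply, Matrix.cons_val', Matrix.empty_val', Matrix.cons_val_fin_one,
            Matrix.vecHead, Matrix.vecTail]
          push_cast
          field_simp

lemma det_coprime (w x y z s : ℤ) (hs : s * s = 1) (hdet : w * z - x * y = s) :
    IsCoprime w y :=
  ⟨s * z, -(s * x), by linear_combination s * hdet + hs⟩

lemma frac_unique (a b c d : ℤ) (hb : 0 < b) (hd : 0 < d)
    (h1 : IsCoprime a b) (h2 : IsCoprime c d) (h : (a:ℚ)/b = (c:ℚ)/d) :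
    a = c ∧ b = d := by
  rw [div_eq_div_iff (by exact_mod_cast hb.ne' : (b:ℚ) ≠ 0) (by exact_mod_cast hd.ne' : (d:ℚ) ≠ 0)] at h
  have h' : a * d = c * b := by exact_mod_cast h
  have hbd : b = d := by
    refine Int.dvd_antisymm hb.le hd.le ?_ ?_
    · exact (h1.symm).dvd_of_dvd_mul_left ⟨c, by linarith [h']⟩
    · exact (h2.symm).dvd_of_dvd_mul_left ⟨a, by linarith [h']⟩
  subst hbd
  exact ⟨mul_right_cancel₀ hb.ne' h', rfl⟩

lemma key (d e f g b s : ℤ) (hs : s * s = 1) (hdet : d * g - e * f = s) :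
    ((!![d,e;f,g] * (!![b+s,1;1,0] * (!![b-s,1;1,0] * 1)) * (!![d,e;f,g])ᵀ :
        Matrix (Fin 2) (Fin 2) ℤ)) 0 0 = (d*b+e)^2 ∧
    ((!![d,e;f,g] * (!![b+s,1;1,0] * (!![b-s,1;1,0] * 1)) * (!![d,e;f,g])ᵀ :
        Matrix (Fin 2) (Fin 2) ℤ)) 1 0 = (d*b+e)*(f*b+g) - 1 := by
  rw [transp, mul_one, Matrix.mul_fin_two, Matrix.mul_fin_two, Matrix.mul_fin_two]
  constructor <;>
    simp only [Matrix.cons_val_zero, Matrix.cons_val_one, Matrix.head_cons,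
      Matrix.of_apply, Matrix.cons_val', Matrix.empty_val', Matrix.cons_val_fin_one,
      Matrix.vecHead, Matrix.vecTail]
  · linear_combination (-(d^2)) * hs
  · linear_combination (-(d*f) - 1) * hs + (-s) * hdet

end CW

open CW Matrix in
theorem crosscap_stmt1 (p q n : ℕ) (a : ℕ → ℤ) (hq : 0 < q) (hqp : q < p)
    (hcop : Nat.Coprime p q) (h0 : 0 ≤ a 0)
    (hpos : ∀ i, 1 ≤ i → i ≤ n → 0 < a i) (hlast : 1 < a n)
    (hcf : cf (List.ofFn fun i : Fin (n+1) => a i) = (q : ℚ) / p) :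
    (Odd n → cf ((List.ofFn fun i : Fin n => a i) ++ [a n + 1, a n - 1] ++
        (List.ofFn fun i : Fin (n-1) => a (i+1)).reverse) = ((p:ℚ)*q - 1) / (p:ℚ)^2) ∧
    (Even n → cf ((List.ofFn fun i : Fin n => a i) ++ [a n - 1, a n + 1] ++
        (List.ofFn fun i : Fin (n-1) => a (i+1)).reverse) = ((p:ℚ)*q - 1) / (p:ℚ)^2) := by
  cases n with
  | zero =>
      exfalso
      have h1 : cf (List.ofFn fun i : Fin (0+1) => a i) = (a 0 : ℚ) := by
        norm_num [List.ofFn_succ, cf]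
      rw [h1] at hcf
      have hq1 : (q:ℚ)/p < 1 := by
        rw [div_lt_one (by exact_mod_cast hq.trans hqp)]
        exact_mod_cast hqp
      have h2 : (1:ℚ) < (a 0 : ℚ) := by exact_mod_cast hlast
      rw [hcf] at h2
      linarith
  | succ m =>
      simp only [Nat.add_sub_cancel]
      have hu_pos : ∀ x ∈ (List.ofFn fun i : Fin m => a (↑i + 1)), 0 < x := by
        intro x hx
        rw [List.mem_ofFn] at hx
        obtain ⟨i, rfl⟩ := hx
        have := i.isLt
        exact hpos _ (by omega) (by omega)
      have hb2 : 2 ≤ a (m+1) := hlast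
      have htpos : ∀ x ∈ (List.ofFn fun i : Fin m => a (↑i + 1)) ++ [a (m+1)], 0 < x := by
        intro x hx
        rcases List.mem_append.1 hx with h | h
        · exact hu_pos x h
        · simp only [List.mem_singleton] at h
          subst h; omega
      have ht : (List.ofFn fun i : Fin (m+1+1) => a ↑i)
          = a 0 :: ((List.ofFn fun i : Fin m => a (↑i + 1)) ++ [a (m+1)]) := by
        rw [List.ofFn_succ, List.ofFn_succ']
        simp [Fin.val_succ, List.concat_eq_append]
      have hT1 : (List.ofFn fun i : Fin (m+1) => a ↑i)
          = a 0 :: (List.ofFn fun i : Fin m => a (↑i + 1)) := by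
        rw [List.ofFn_succ]
        simp [Fin.val_succ]
      obtain ⟨d, e, f, g, hMu⟩ :
          ∃ d e f g, M (List.ofFn fun i : Fin m => a (↑i + 1)) = !![d,e;f,g] :=
        ⟨_,_,_,_, Matrix.eta_fin_two _⟩
      have hMt : M ((List.ofFn fun i : Fin m => a (↑i + 1)) ++ [a (m+1)])
          = !![d * a (m+1) + e, d; f * a (m+1) + g, f] := by
        rw [M_append, hMu, M_cons, M_nil, mul_one, Matrix.mul_fin_two]
        norm_num
      have hXY := M_pos ((List.ofFn fun i : Fin m => a (↑i + 1)) ++ [a (m+1)])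
        (by simp) htpos
      rw [hMt] at hXY
      have hX : 0 < d * a (m+1) + e := by simpa using hXY.1
      have hY : 0 < f * a (m+1) + g := by simpa using hXY.2.1
      have hX0 : ((d * a (m+1) + e : ℤ):ℚ) ≠ 0 := by exact_mod_cast hX.ne'
      have hcf' : ((a 0 * (d * a (m+1) + e) + (f * a (m+1) + g) : ℤ) : ℚ)
          / ((d * a (m+1) + e : ℤ):ℚ) = (q:ℚ)/(p:ℚ) := by
        rw [← hcf, ht, cf_cons _ _ (by simp),
          cf_M _ htpos (by simp), hMt, inv_div]
        simp only [Matrix.cons_val_zero, Matrix.cons_val_one, Matrix.head_cons,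
          Matrix.of_apply, Matrix.cons_val', Matrix.empty_val', Matrix.cons_val_fin_one,
          Matrix.vecHead, Matrix.vecTail]
        push_cast
        have hX0' : ((d:ℚ) * (a (m+1) : ℚ) + (e:ℚ)) ≠ 0 := by push_cast at hX0; exact hX0
        field_simp
      have hMl : M (a 0 :: ((List.ofFn fun i : Fin m => a (↑i + 1)) ++ [a (m+1)]))
          = !![a 0 * (d * a (m+1) + e) + (f * a (m+1) + g), a 0 * d + f;
              d * a (m+1) + e, d] := by
        rw [M_cons, hMt, M_entries]
        norm_num
      have hdetl : (a 0 * (d * a (m+1) + e) + (f * a (m+1) + g)) * d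
          - (a 0 * d + f) * (d * a (m+1) + e) = (-1)^(m+2) := by
        have h := M_det (a 0 :: ((List.ofFn fun i : Fin m => a (↑i + 1)) ++ [a (m+1)]))
        rw [hMl, Matrix.det_fin_two_of] at h
        simpa using h
      have hs2 : ((-1:ℤ)^(m+2)) * ((-1:ℤ)^(m+2)) = 1 := by
        rw [← pow_add]
        exact Even.neg_one_pow ⟨m+2, by ring⟩
      have hcop1 : IsCoprime (a 0 * (d * a (m+1) + e) + (f * a (m+1) + g))
          (d * a (m+1) + e) := det_coprime _ _ _ _ _ hs2 hdetl
      have hcop2 : IsCoprime (q:ℤ) (p:ℤ) := Nat.isCoprime_iff_coprime.mpr hcop.symm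
      have hp0 : (0:ℤ) < (p:ℤ) := by exact_mod_cast hq.trans hqp
      obtain ⟨hq', hp'⟩ := frac_unique _ _ _ _ hX hp0 hcop1 hcop2 hcf'
      have hdu : d * g - e * f = (-1)^m := by
        have h := M_det (List.ofFn fun i : Fin m => a (↑i + 1))
        rw [hMu, Matrix.det_fin_two_of] at h
        simpa using h
      have main : ∀ s : ℤ, s * s = 1 → d * g - e * f = s →
          cf ((a 0 :: (List.ofFn fun i : Fin m => a (↑i + 1)))
              ++ [a (m+1) + s, a (m+1) - s]
              ++ (List.ofFn fun i : Fin m => a (↑i + 1)).reverse)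
            = ((p:ℚ) * q - 1) / (p:ℚ)^2 := by
        intro s hs hdet
        have hs1 : s = 1 ∨ s = -1 := mul_self_eq_one_iff.mp hs
        have hpos' : ∀ x ∈ (List.ofFn fun i : Fin m => a (↑i + 1))
            ++ [a (m+1) + s, a (m+1) - s]
            ++ (List.ofFn fun i : Fin m => a (↑i + 1)).reverse, 0 < x := by
          intro x hx
          simp only [List.mem_append, List.mem_reverse, List.mem_cons,
            List.not_mem_nil, or_false] at hx
          rcases hx with (hx | hx) | hx
          · exact hu_pos x hx
          · rcases hx with rfl | rfl <;> rcases hs1 with rfl | rfl <;> omega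
          · exact hu_pos x hx
        have hT : (a 0 :: (List.ofFn fun i : Fin m => a (↑i + 1)))
            ++ [a (m+1) + s, a (m+1) - s]
            ++ (List.ofFn fun i : Fin m => a (↑i + 1)).reverse
            = a 0 :: ((List.ofFn fun i : Fin m => a (↑i + 1))
              ++ [a (m+1) + s, a (m+1) - s]
              ++ (List.ofFn fun i : Fin m => a (↑i + 1)).reverse) := by simp
        obtain ⟨k1, k2⟩ := key d e f g (a (m+1)) s hs hdet
        have hM : M ((List.ofFn fun i : Fin m => a (↑i + 1))
              ++ [a (m+1) + s, a (m+1) - s]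
              ++ (List.ofFn fun i : Fin m => a (↑i + 1)).reverse)
            = !![d,e;f,g] * (!![a (m+1) + s,1;1,0] * (!![a (m+1) - s,1;1,0] * 1))
                * (!![d,e;f,g])ᵀ := by
          rw [M_append, M_append, M_reverse, hMu, M_cons, M_cons, M_nil]
        rw [hT, cf_cons _ _ (by simp), cf_M _ hpos' (by simp), hM, k1, k2, inv_div]
        have e1 : ((p:ℕ):ℚ) = ((d * a (m+1) + e : ℤ) : ℚ) := by exact_mod_cast hp'.symm
        have e2 : ((q:ℕ):ℚ)
            = ((a 0 * (d * a (m+1) + e) + (f * a (m+1) + g) : ℤ) : ℚ) := by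
          exact_mod_cast hq'.symm
        rw [e1, e2]
        push_cast
        have hX0' : ((d:ℚ) * (a (m+1) : ℚ) + (e:ℚ)) ≠ 0 := by push_cast at hX0; exact hX0
        field_simp
        ring
      constructor
      · intro hodd
        have hm : Even m := by
          obtain ⟨k, hk⟩ := hodd
          exact ⟨k, by omega⟩
        have hdet1 : d * g - e * f = 1 := by rw [hdu]; exact hm.neg_one_pow
        have h := main 1 (by norm_num) hdet1
        rw [hT1]
        exact h
      · intro heven
        have hm : Odd m := by
          obtain ⟨k, hk⟩ := heven
          exact ⟨k - 1, by omega⟩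
        have hdet1 : d * g - e * f = -1 := by rw [hdu]; exact hm.neg_one_pow
        have h := main (-1) (by norm_num) hdet1
        rw [show a (m+1) + -1 = a (m+1) - 1 from by ring,
          show a (m+1) - -1 = a (m+1) + 1 from by ring] at h
        rw [hT1]
        exact h
end

section
/- Let p, q be coprime positive integers with p > q, and let q/p = [a_0, a_1, ..., a_n] be its continued fraction expansion with a_0 ≥ 0, a_i > 0, a_n > 1. If n is odd, then (pq+1)/p^2 = [a_0, a_1, ..., a_{n-1}, a_n-1, a_n+1, a_{n-1}, ..., a_2, a_1]; if n is even, then (pq+1)/p^2 = [a_0, a_1, ..., a_{n-1}, a_n+1, a_n-1, a_{n-1}, ..., a_2, a_1]. -/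
open Matrix


def Mp (l : List ℤ) : Matrix (Fin 2) (Fin 2) ℤ :=
  (l.map fun a => !![a, 1; 1, 0]).prod

lemma Mp_nil : Mp [] = 1 := rfl

lemma Mp_cons (a : ℤ) (l : List ℤ) : Mp (a :: l) = !![a,1;1,0] * Mp l := by
  simp [Mp]

lemma Mp_append (l m : List ℤ) : Mp (l ++ m) = Mp l * Mp m := by
  simp [Mp]

lemma Mp_singleton (a : ℤ) : Mp [a] = !![a,1;1,0] := by
  simp [Mp]

lemma Mp_reverse (l : List ℤ) : Mp l.reverse = (Mp l)ᵀ := by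
  induction l with
  | nil => simp [Mp_nil]
  | cons a l ih =>
    have hs : (!![a,1;1,0] : Matrix (Fin 2) (Fin 2) ℤ)ᵀ = !![a,1;1,0] := by
      ext i j; fin_cases i <;> fin_cases j <;> rfl
    calc Mp ((a :: l).reverse) = Mp (l.reverse ++ [a]) := by rw [List.reverse_cons]
      _ = Mp l.reverse * Mp [a] := Mp_append _ _
      _ = (Mp l)ᵀ * (!![a,1;1,0])ᵀ := by rw [ih, Mp_singleton, hs]
      _ = (!![a,1;1,0] * Mp l)ᵀ := (Matrix.transpose_mul _ _).symm
      _ = (Mp (a :: l))ᵀ := by rw [Mp_cons]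

lemma Mp_det (l : List ℤ) : (Mp l).det = (-1) ^ l.length := by
  induction l with
  | nil => simp [Mp_nil]
  | cons a l ih =>
    rw [Mp_cons, Matrix.det_mul, ih]
    simp [Matrix.det_fin_two_of]
    ring

lemma Mp_cons00 (a : ℤ) (l : List ℤ) : Mp (a :: l) 0 0 = a * Mp l 0 0 + Mp l 1 0 := by
  rw [Mp_cons]
  simp [Matrix.mul_apply, Fin.sum_univ_two]

lemma Mp_cons10 (a : ℤ) (l : List ℤ) : Mp (a :: l) 1 0 = Mp l 0 0 := by
  rw [Mp_cons]
  simp [Matrix.mul_apply, Fin.sum_univ_two]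

lemma Mp_cons1j (a : ℤ) (l : List ℤ) (j : Fin 2) : Mp (a :: l) 1 j = Mp l 0 j := by
  rw [Mp_cons]
  simp [Matrix.mul_apply, Fin.sum_univ_two]

lemma Mp_entries_pos : ∀ l : List ℤ, (∀ a ∈ l, 0 < a) → 0 < Mp l 0 0 ∧ 0 ≤ Mp l 1 0 := by
  intro l
  induction l with
  | nil => intro _; constructor <;> norm_num [Mp_nil]
  | cons a l ih =>
    intro h
    have ha : 0 < a := h a List.mem_cons_self
    obtain ⟨h1, h2⟩ := ih (fun x hx => h x (List.mem_cons_of_mem _ hx))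
    rw [Mp_cons00, Mp_cons10]
    constructor
    · nlinarith
    · linarith

lemma cf_cons_cons (a b : ℤ) (m : List ℤ) : cf (a :: b :: m) = a + (cf (b :: m))⁻¹ := rfl

lemma cf_eq : ∀ l : List ℤ, (∀ a ∈ l.tail, 0 < a) → cf l = (Mp l 0 0 : ℚ) / (Mp l 1 0 : ℚ) := by
  intro l
  induction l with
  | nil =>
    intro _
    show (0:ℚ) = _
    rw [Mp_nil]
    norm_num [Matrix.one_apply]
  | cons a l ih =>
    intro h
    cases l with
    | nil =>
      show ((a:ℚ)) = _
      rw [Mp_singleton]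
      norm_num
    | cons b m =>
      have hpos : ∀ x ∈ b :: m, 0 < x := by simpa using h
      have htail : ∀ x ∈ (b :: m).tail, 0 < x := fun x hx => hpos x (List.mem_cons_of_mem _ hx)
      obtain ⟨h1, _⟩ := Mp_entries_pos _ hpos
      have h1' : ((Mp (b::m) 0 0 : ℤ) : ℚ) ≠ 0 := by exact_mod_cast h1.ne'
      rw [cf_cons_cons, ih htail, Mp_cons00 a (b::m), Mp_cons10 a (b::m), inv_div]
      push_cast
      field_simp

theorem crosscap_stmt2 (p q n : ℕ) (a : ℕ → ℤ) (hq : 0 < q) (hqp : q < p)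
    (hcop : Nat.Coprime p q) (h0 : 0 ≤ a 0)
    (hpos : ∀ i, 1 ≤ i → i ≤ n → 0 < a i) (hlast : 1 < a n)
    (hcf : cf (List.ofFn fun i : Fin (n+1) => a i) = (q : ℚ) / p) :
    (Odd n → cf ((List.ofFn fun i : Fin n => a i) ++ [a n - 1, a n + 1] ++
        (List.ofFn fun i : Fin (n-1) => a (i+1)).reverse) = ((p:ℚ)*q + 1) / (p:ℚ)^2) ∧
    (Even n → cf ((List.ofFn fun i : Fin n => a i) ++ [a n + 1, a n - 1] ++
        (List.ofFn fun i : Fin (n-1) => a (i+1)).reverse) = ((p:ℚ)*q + 1) / (p:ℚ)^2) := by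
  have hp0 : 0 < p := lt_trans hq hqp
  -- L0 and its decomposition
  have hL0 : (List.ofFn fun i : Fin (n+1) => a i)
      = a 0 :: List.ofFn (fun i : Fin n => a (i + 1)) := by
    rw [List.ofFn_succ]
    simp [Fin.val_succ]
  have hT0pos : ∀ x ∈ List.ofFn (fun i : Fin n => a (i + 1)), 0 < x := by
    intro x hx
    rw [List.mem_ofFn] at hx
    obtain ⟨i, hi⟩ := hx
    rw [← hi]
    exact hpos (i + 1) (by omega) (by omega)
  have htail : ∀ x ∈ (List.ofFn fun i : Fin (n+1) => a i).tail, 0 < x := by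
    rw [hL0]
    exact fun x hx => hT0pos x hx
  have hB1pos : 0 < Mp (List.ofFn fun i : Fin (n+1) => a i) 1 0 := by
    rw [hL0, Mp_cons10]
    exact (Mp_entries_pos _ hT0pos).1
  set L0 := List.ofFn fun i : Fin (n+1) => a i with hL0def
  -- cross multiplication
  have hcfL0 : ((q:ℚ))/p = (Mp L0 0 0 : ℚ) / (Mp L0 1 0 : ℚ) := by
    rw [← hcf, cf_eq L0 htail]
  have hpQ : ((p:ℚ)) ≠ 0 := by positivity
  have hBQ : ((Mp L0 1 0 : ℤ):ℚ) ≠ 0 := by exact_mod_cast hB1pos.ne'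
  have hcross : (q:ℤ) * Mp L0 1 0 = Mp L0 0 0 * (p:ℤ) := by
    have := (div_eq_div_iff hpQ hBQ).mp hcfL0
    exact_mod_cast this
  -- coprimality of the two entries
  have hdet := Mp_det L0
  rw [Matrix.det_fin_two] at hdet
  have hlen : L0.length = n + 1 := by rw [hL0def, List.length_ofFn]
  rw [hlen] at hdet
  have hcop2 : IsCoprime (Mp L0 0 0) (Mp L0 1 0) := by
    rcases Nat.even_or_odd (n+1) with h | h
    · exact ⟨Mp L0 1 1, -Mp L0 0 1, by
        have : ((-1:ℤ))^(n+1) = 1 := h.neg_one_pow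
        rw [this] at hdet; linarith [hdet]⟩
    · exact ⟨-Mp L0 1 1, Mp L0 0 1, by
        have : ((-1:ℤ))^(n+1) = -1 := h.neg_one_pow
        rw [this] at hdet; linarith [hdet]⟩
  have hpq : IsCoprime (p:ℤ) (q:ℤ) := by
    rw [Int.isCoprime_iff_gcd_eq_one, Int.gcd_natCast_natCast]
    exact hcop
  have hpB : (p:ℤ) ∣ Mp L0 1 0 := by
    have h1 : (p:ℤ) ∣ Mp L0 1 0 * (q:ℤ) := ⟨Mp L0 0 0, by linarith [hcross]⟩
    exact hpq.dvd_of_dvd_mul_right h1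
  have hBp : Mp L0 1 0 ∣ (p:ℤ) := by
    have h1 : Mp L0 1 0 ∣ (p:ℤ) * Mp L0 0 0 := ⟨(q:ℤ), by linarith [hcross]⟩
    exact (hcop2.symm).dvd_of_dvd_mul_right h1
  have hBeq : Mp L0 1 0 = (p:ℤ) :=
    Int.dvd_antisymm (le_of_lt hB1pos) (by positivity) hBp hpB
  have hAeq : Mp L0 0 0 = (q:ℤ) := by
    have hpne : (p:ℤ) ≠ 0 := by positivity
    have : Mp L0 0 0 * (p:ℤ) = (q:ℤ) * (p:ℤ) := by rw [← hcross, hBeq]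
    exact mul_right_cancel₀ hpne this
  -- n ≥ 1
  have hn1 : 1 ≤ n := by
    by_contra hn
    have hn0 : n = 0 := by omega
    subst hn0
    have hone : Mp L0 1 0 = 1 := by
      have : L0 = [a 0] := by simp [hL0def, List.ofFn_succ]
      rw [this, Mp_singleton]
      norm_num
    rw [hone] at hBeq
    have : p = 1 := by exact_mod_cast hBeq.symm
    omega
  obtain ⟨m, rfl⟩ : ∃ m, n = m + 1 := ⟨n - 1, by omega⟩
  have hF : (List.ofFn fun i : Fin (m+1) => a i)
      = a 0 :: List.ofFn (fun i : Fin m => a (i + 1)) := by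
    rw [List.ofFn_succ]
    simp [Fin.val_succ]
  set T := List.ofFn (fun i : Fin m => a (i + 1)) with hTdef
  set F := (List.ofFn fun i : Fin (m+1) => a i : List ℤ) with hFdef
  have hTpos : ∀ y ∈ T, 0 < y := by
    intro y hy
    rw [hTdef, List.mem_ofFn] at hy
    obtain ⟨i, hi⟩ := hy
    rw [← hi]
    exact hpos _ (by omega) (by omega)
  have hL0F : L0 = F ++ [a (m+1)] := by
    rw [hL0def, hFdef, List.ofFn_succ', List.concat_eq_append]
    simp
  have hTy : Mp T 0 0 = Mp F 1 0 := by rw [hF, Mp_cons1j]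
  have hTz : Mp T 0 1 = Mp F 1 1 := by rw [hF, Mp_cons1j]
  have hq' : Mp F 0 0 * a (m+1) + Mp F 0 1 = (q:ℤ) := by
    rw [← hAeq, hL0F, Mp_append, Mp_singleton]
    simp [Matrix.mul_apply, Fin.sum_univ_two]
  have hp' : Mp F 1 0 * a (m+1) + Mp F 1 1 = (p:ℤ) := by
    rw [← hBeq, hL0F, Mp_append, Mp_singleton]
    simp [Matrix.mul_apply, Fin.sum_univ_two]
  have hlF : F.length = m + 1 := by rw [hFdef]; exact List.length_ofFn
  have hdetF : Mp F 0 0 * Mp F 1 1 - Mp F 0 1 * Mp F 1 0 = (-1:ℤ)^(m+1) := by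
    have h := Mp_det F
    rw [Matrix.det_fin_two, hlF] at h
    exact h
  have htailL : ∀ b1 b2 : ℤ, 0 < b1 → 0 < b2 →
      ∀ x ∈ (F ++ [b1, b2] ++ T.reverse).tail, 0 < x := by
    intro b1 b2 hb1 hb2 x hx
    rw [hF] at hx
    simp only [List.cons_append, List.tail_cons, List.mem_append, List.mem_reverse,
      List.mem_cons, List.not_mem_nil, or_false] at hx
    rcases hx with (h | (h | h)) | h
    · exact hTpos x h
    · rw [h]; exact hb1
    · rw [h]; exact hb2
    · exact hTpos x h
  have hent : ∀ b1 b2 : ℤ,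
      Mp (F ++ [b1, b2] ++ T.reverse) 0 0
        = Mp F 0 0 * (b1*(b2*(Mp F 1 0)+(Mp F 1 1))+(Mp F 1 0))
          + Mp F 0 1 * (b2*(Mp F 1 0)+(Mp F 1 1))
      ∧ Mp (F ++ [b1, b2] ++ T.reverse) 1 0
        = Mp F 1 0 * (b1*(b2*(Mp F 1 0)+(Mp F 1 1))+(Mp F 1 0))
          + Mp F 1 1 * (b2*(Mp F 1 0)+(Mp F 1 1)) := by
    intro b1 b2
    have e : Mp (F ++ [b1, b2] ++ T.reverse)
        = (Mp F * (!![b1,1;1,0] * (!![b2,1;1,0] * 1))) * (Mp T)ᵀ := by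
      rw [Mp_append, Mp_append, Mp_reverse, Mp_cons, Mp_cons, Mp_nil]
    rw [e]
    constructor <;>
      · simp [Matrix.mul_apply, Fin.sum_univ_two, Matrix.transpose_apply, hTy, hTz]
        ring
  constructor
  · intro hodd
    obtain ⟨h00, h10⟩ := hent (a (m+1) - 1) (a (m+1) + 1)
    have hdet' : Mp F 0 0 * Mp F 1 1 - Mp F 0 1 * Mp F 1 0 = -1 := by
      rw [hodd.neg_one_pow] at hdetF
      exact hdetF
    have e00 : Mp (F ++ [a (m+1) - 1, a (m+1) + 1] ++ T.reverse) 0 0 = (q:ℤ)*(p:ℤ)+1 := by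
      rw [h00, ← hq', ← hp']
      linear_combination -hdet'
    have e10 : Mp (F ++ [a (m+1) - 1, a (m+1) + 1] ++ T.reverse) 1 0 = (p:ℤ)*(p:ℤ) := by
      rw [h10, ← hp']
      ring
    show cf (F ++ [a (m+1) - 1, a (m+1) + 1] ++ T.reverse) = ((p:ℚ)*(q:ℚ) + 1)/(p:ℚ)^2
    rw [cf_eq _ (htailL (a (m+1) - 1) (a (m+1) + 1) (by linarith) (by linarith)), e00, e10]
    push_cast
    ring
  · intro heven
    obtain ⟨h00, h10⟩ := hent (a (m+1) + 1) (a (m+1) - 1)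
    have hdet' : Mp F 0 0 * Mp F 1 1 - Mp F 0 1 * Mp F 1 0 = 1 := by
      rw [heven.neg_one_pow] at hdetF
      exact hdetF
    have e00 : Mp (F ++ [a (m+1) + 1, a (m+1) - 1] ++ T.reverse) 0 0 = (q:ℤ)*(p:ℤ)+1 := by
      rw [h00, ← hq', ← hp']
      linear_combination hdet'
    have e10 : Mp (F ++ [a (m+1) + 1, a (m+1) - 1] ++ T.reverse) 1 0 = (p:ℤ)*(p:ℤ) := by
      rw [h10, ← hp']
      ring
    show cf (F ++ [a (m+1) + 1, a (m+1) - 1] ++ T.reverse) = ((p:ℚ)*(q:ℚ) + 1)/(p:ℚ)^2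
    rw [cf_eq _ (htailL (a (m+1) + 1) (a (m+1) - 1) (by linarith) (by linarith)), e00, e10]
    push_cast
    ring
end

section
/- Let p > q > 0 be coprime integers with p/q = [a_1, a_2, ..., a_n] (continued fraction with all a_i > 0, a_n > 1), and let p_i/q_i = [a_1, ..., a_i] be the i-th convergent. Then [a_1, a_2, ..., a_{n-1}, a_n+1, a_n-1, a_{n-1}, a_{n-2}, ..., a_2, a_1] = p^2/(pq + (-1)^n). -/
open Matrix

def Mcf : List ℤ → Matrix (Fin 2) (Fin 2) ℤ
  | [] => 1
  | a :: l => !![a,1;1,0] * Mcf l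

lemma Mcf_nil : Mcf [] = 1 := rfl
lemma Mcf_cons (a : ℤ) (l : List ℤ) : Mcf (a :: l) = !![a,1;1,0] * Mcf l := rfl

lemma Mcf_append (l l' : List ℤ) : Mcf (l ++ l') = Mcf l * Mcf l' := by
  induction l with
  | nil => simp [Mcf_nil]
  | cons a l ih => simp [Mcf_cons, ih, Matrix.mul_assoc]

lemma Mcf_single (a : ℤ) : Mcf [a] = !![a,1;1,0] := by
  simp [Mcf_cons, Mcf_nil]

lemma Mcf_reverse (l : List ℤ) : Mcf l.reverse = (Mcf l)ᵀ := by
  induction l with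
  | nil => simp [Mcf_nil]
  | cons a l ih =>
      rw [List.reverse_cons, Mcf_append, ih, Mcf_single, Mcf_cons, Matrix.transpose_mul]
      congr 1
      ext i j
      fin_cases i <;> fin_cases j <;> simp

lemma Mcf_det (l : List ℤ) : (Mcf l).det = (-1)^l.length := by
  induction l with
  | nil => simp [Mcf_nil]
  | cons a l ih =>
      rw [Mcf_cons, Matrix.det_mul, ih]
      simp [Matrix.det_fin_two_of, pow_succ]

lemma Mcf_cons_00 (a : ℤ) (l : List ℤ) :
    Mcf (a :: l) 0 0 = a * Mcf l 0 0 + Mcf l 1 0 := by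
  simp [Mcf_cons, Matrix.mul_apply, Fin.sum_univ_two]

lemma Mcf_cons_10 (a : ℤ) (l : List ℤ) : Mcf (a :: l) 1 0 = Mcf l 0 0 := by
  simp [Mcf_cons, Matrix.mul_apply, Fin.sum_univ_two]

lemma Mcf_pos {l : List ℤ} (h : ∀ x ∈ l, 1 ≤ x) :
    1 ≤ Mcf l 0 0 ∧ 0 ≤ Mcf l 1 0 ∧ (l ≠ [] → 1 ≤ Mcf l 1 0) := by
  induction l with
  | nil => simp [Mcf_nil, Matrix.one_apply]
  | cons a l ih =>
      have hl : ∀ x ∈ l, 1 ≤ x := fun x hx => h x (List.mem_cons_of_mem _ hx)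
      obtain ⟨h00, h10, -⟩ := ih hl
      have ha : 1 ≤ a := h a List.mem_cons_self
      refine ⟨?_, ?_, fun _ => ?_⟩
      · rw [Mcf_cons_00]; nlinarith
      · rw [Mcf_cons_10]; omega
      · rw [Mcf_cons_10]; omega

lemma cf_cons (a : ℤ) (l : List ℤ) : cf (a :: l) = (a : ℚ) + (cf l)⁻¹ := by
  cases l with
  | nil => simp [cf]
  | cons b l => rfl

lemma cf_Mcf {l : List ℤ} (h : ∀ x ∈ l, 1 ≤ x) :
    cf l = (Mcf l 0 0 : ℚ) / (Mcf l 1 0 : ℚ) := by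
  induction l with
  | nil => simp [cf, Mcf_nil, Matrix.one_apply]
  | cons a l ih =>
      have hl : ∀ x ∈ l, 1 ≤ x := fun x hx => h x (List.mem_cons_of_mem _ hx)
      obtain ⟨h00, h10, -⟩ := Mcf_pos hl
      have hne : (Mcf l 0 0 : ℚ) ≠ 0 := by positivity
      rw [cf_cons, ih hl, Mcf_cons_00, Mcf_cons_10, inv_div]
      push_cast
      field_simp

lemma Mcf_key (A : Matrix (Fin 2) (Fin 2) ℤ) (t : ℤ) :
    (A * Mcf [t+1, t-1] * Aᵀ) 0 0 = (A 0 0 * t + A 0 1)^2 ∧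
    (A * Mcf [t+1, t-1] * Aᵀ) 1 0 =
      (A 0 0 * t + A 0 1) * (A 1 0 * t + A 1 1) - A.det := by
  rw [Mcf_cons, Mcf_single]
  constructor <;>
    · simp [Matrix.mul_apply, Fin.sum_univ_two, Matrix.transpose_apply, Matrix.det_fin_two]
      ring


theorem crosscap_stmt3 (p q n : ℕ) (a : ℕ → ℤ) (hq : 0 < q) (hqp : q < p)
    (hcop : Nat.Coprime p q) (hn : 1 ≤ n)
    (hpos : ∀ i, 1 ≤ i → i ≤ n → 0 < a i) (hlast : 1 < a n)
    (hcf : cf (List.ofFn fun i : Fin n => a (i+1)) = (p : ℚ) / q) :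
    cf ((List.ofFn fun i : Fin (n-1) => a (i+1)) ++ [a n + 1, a n - 1] ++
        (List.ofFn fun i : Fin (n-1) => a (i+1)).reverse)
      = (p:ℚ)^2 / ((p:ℚ) * q + (-1)^n) := by
  obtain ⟨m, rfl⟩ : ∃ m, n = m + 1 := ⟨n - 1, (Nat.succ_pred_eq_of_pos hn).symm⟩
  set l' : List ℤ := List.ofFn fun i : Fin m => a (i+1) with hl'
  set t : ℤ := a (m+1) with ht
  show cf (l' ++ [t + 1, t - 1] ++ l'.reverse) = (p:ℚ)^2 / ((p:ℚ) * q + (-1)^(m+1))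
  have ht1 : 1 < t := hlast
  have hl'mem : ∀ x ∈ l', 1 ≤ x := by
    intro x hx
    rw [hl', List.mem_ofFn] at hx
    obtain ⟨i, rfl⟩ := hx
    have hi := i.isLt
    have h := hpos (↑i + 1) (by omega) (by omega)
    show (1:ℤ) ≤ a (↑i + 1)
    omega
  have hfull : (List.ofFn fun i : Fin (m+1) => a (i+1)) = l' ++ [t] := by
    rw [List.ofFn_succ', List.concat_eq_append]
    simp [hl', ht]
  rw [hfull] at hcf
  have hmemfull : ∀ x ∈ l' ++ [t], 1 ≤ x := by
    intro x hx
    rcases List.mem_append.1 hx with h | h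
    · exact hl'mem x h
    · simp at h; omega
  -- entries of the convergent matrix
  have hA : Mcf (l' ++ [t]) 0 0 = Mcf l' 0 0 * t + Mcf l' 0 1 ∧
      Mcf (l' ++ [t]) 1 0 = Mcf l' 1 0 * t + Mcf l' 1 1 := by
    rw [Mcf_append, Mcf_single]
    constructor <;> simp [Matrix.mul_apply, Fin.sum_univ_two]
  obtain ⟨h00, h10, h10'⟩ := Mcf_pos hmemfull
  have hne : (l' ++ [t]) ≠ [] := by simp
  have h10'' := h10' hne
  set P := Mcf l' 0 0 * t + Mcf l' 0 1 with hP
  set Q := Mcf l' 1 0 * t + Mcf l' 1 1 with hQ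
  rw [hA.1] at h00
  rw [hA.2] at h10''
  -- coprimality of P and Q from the determinant
  have hdetfull : (Mcf (l' ++ [t])).det = (-1)^(m+1) := by
    rw [Mcf_det]; simp [hl']
  rw [Matrix.det_fin_two, hA.1, hA.2] at hdetfull
  have hcoprime : IsCoprime P Q := by
    rcases Nat.even_or_odd (m+1) with hpar | hpar
    · rw [hpar.neg_one_pow] at hdetfull
      exact ⟨Mcf (l' ++ [t]) 1 1, -(Mcf (l' ++ [t]) 0 1), by linarith⟩
    · rw [hpar.neg_one_pow] at hdetfull
      exact ⟨-(Mcf (l' ++ [t]) 1 1), Mcf (l' ++ [t]) 0 1, by linarith⟩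
  -- identify P = p, Q = q
  have hcfM : ((P : ℤ) : ℚ) / ((Q : ℤ) : ℚ) = (p : ℚ) / q := by
    rw [← hA.1, ← hA.2, ← cf_Mcf hmemfull, hcf]
  have hqQ : (p : ℤ) * Q = (q : ℤ) * P := by
    have hq0 : ((q:ℕ) : ℚ) ≠ 0 := by positivity
    have hQ0 : ((Q : ℤ) : ℚ) ≠ 0 := by
      have : (0:ℚ) < ((Q:ℤ):ℚ) := by exact_mod_cast h10''
      linarith
    have h1 := (div_eq_div_iff hQ0 hq0).1 hcfM
    have h2 : ((↑((p:ℤ) * Q) : ℚ)) = ((↑((q:ℤ) * P) : ℚ)) := by push_cast; linarith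
    exact_mod_cast h2
  have hcopPQ : IsCoprime ((p:ℤ)) ((q:ℤ)) := Int.isCoprime_iff_gcd_eq_one.2 (by
    simpa [Int.gcd_natCast_natCast] using hcop)
  have hpP : (p : ℤ) = P := by
    have h1 : (p : ℤ) ∣ P := by
      refine hcopPQ.dvd_of_dvd_mul_left ?_
      exact ⟨Q, by linarith⟩
    have h2 : P ∣ (p : ℤ) := by
      refine hcoprime.dvd_of_dvd_mul_right ?_
      exact ⟨(q:ℤ), by linarith⟩
    exact Int.dvd_antisymm (by positivity) (by omega) h1 h2
  have hqQ' : (q : ℤ) = Q := by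
    have hp0 : (p : ℤ) ≠ 0 := by omega
    have : (p:ℤ) * Q = (p:ℤ) * (q:ℤ) := by rw [hqQ, hpP]; ring
    have := mul_left_cancel₀ hp0 this
    omega
  -- the big list
  have hbig : ∀ x ∈ l' ++ [t + 1, t - 1] ++ l'.reverse, 1 ≤ x := by
    intro x hx
    rcases List.mem_append.1 hx with h | h
    · rcases List.mem_append.1 h with h | h
      · exact hl'mem x h
      · simp at h; rcases h with h | h <;> omega
    · exact hl'mem x (List.mem_reverse.1 h)
  rw [cf_Mcf hbig]
  have hM : Mcf (l' ++ [t+1, t-1] ++ l'.reverse) = Mcf l' * Mcf [t+1, t-1] * (Mcf l')ᵀ := by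
    rw [Mcf_append, Mcf_append, Mcf_reverse]
  obtain ⟨hk1, hk2⟩ := Mcf_key (Mcf l') t
  have hdetl' : (Mcf l').det = (-1)^m := by rw [Mcf_det]; simp [hl']
  rw [hM, hk1, hk2, hdetl', ← hP, ← hQ, ← hpP, ← hqQ']
  push_cast
  rw [pow_succ]
  ring_nf
end

section
/- Let p > q > 0 be coprime integers with p/q = [a_1, a_2, ..., a_n] (all a_i > 0, a_n > 1). Then [a_1, a_2, ..., a_{n-1}, a_n-1, a_n+1, a_{n-1}, a_{n-2}, ..., a_2, a_1] = p^2/(pq + (-1)^{n-1}). -/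
open Matrix

def Mm (x : ℤ) : Matrix (Fin 2) (Fin 2) ℤ := !![x, 1; 1, 0]

def Pm (l : List ℤ) : Matrix (Fin 2) (Fin 2) ℤ := (l.map Mm).prod

lemma Pm_nil : Pm [] = 1 := rfl

lemma Pm_cons (x : ℤ) (l : List ℤ) : Pm (x :: l) = Mm x * Pm l := by
  simp [Pm]

lemma Pm_append (l m : List ℤ) : Pm (l ++ m) = Pm l * Pm m := by
  simp [Pm]

lemma Pm_singleton (x : ℤ) : Pm [x] = Mm x := by simp [Pm]

lemma Mm_transpose (x : ℤ) : (Mm x)ᵀ = Mm x := by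
  simp [Mm]
  ext i j; fin_cases i <;> fin_cases j <;> rfl

lemma Pm_reverse (l : List ℤ) : Pm l.reverse = (Pm l)ᵀ := by
  induction l with
  | nil => simp [Pm_nil]
  | cons x l ih =>
      rw [List.reverse_cons, Pm_append, Pm_singleton, Pm_cons, transpose_mul,
        ih, Mm_transpose]

lemma Pm_det (l : List ℤ) : (Pm l).det = (-1) ^ l.length := by
  induction l with
  | nil => simp [Pm_nil]
  | cons x l ih =>
      have : (Mm x).det = -1 := by simp [Mm]
      rw [Pm_cons, det_mul, ih, this, List.length_cons]
      ring

lemma Mm_mul_00 (x : ℤ) (P : Matrix (Fin 2) (Fin 2) ℤ) :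
    (Mm x * P) 0 0 = x * P 0 0 + P 1 0 := by
  simp [Matrix.mul_apply, Fin.sum_univ_two, Mm]

lemma Mm_mul_10 (x : ℤ) (P : Matrix (Fin 2) (Fin 2) ℤ) :
    (Mm x * P) 1 0 = P 0 0 := by
  simp [Matrix.mul_apply, Fin.sum_univ_two, Mm]

lemma Pm_pos (l : List ℤ) (h : ∀ x ∈ l, 0 < x) :
    0 < Pm l 0 0 ∧ 0 ≤ Pm l 1 0 := by
  induction l with
  | nil => simp [Pm_nil]
  | cons x l ih =>
      obtain ⟨h1, h2⟩ := ih (fun y hy => h y (List.mem_cons_of_mem _ hy))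
      have hx := h x List.mem_cons_self
      rw [Pm_cons, Mm_mul_00, Mm_mul_10]
      constructor
      · nlinarith
      · linarith

lemma Pm_pos' (l : List ℤ) (hl : l ≠ []) (h : ∀ x ∈ l, 0 < x) :
    0 < Pm l 0 0 ∧ 0 < Pm l 1 0 := by
  cases l with
  | nil => exact absurd rfl hl
  | cons x t =>
      obtain ⟨h1, h2⟩ := Pm_pos (x :: t) h
      have ht := Pm_pos t (fun y hy => h y (List.mem_cons_of_mem _ hy))
      rw [Pm_cons, Mm_mul_10]
      exact ⟨h1, ht.1⟩

lemma cf_eq_s4 (l : List ℤ) (hl : l ≠ []) (h : ∀ x ∈ l, 0 < x) :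
    cf l = (Pm l 0 0 : ℚ) / (Pm l 1 0) := by
  induction l with
  | nil => exact absurd rfl hl
  | cons x l ih =>
      cases l with
      | nil =>
          show (x : ℚ) = _
          rw [Pm_singleton]
          simp [Mm]
      | cons y t =>
          have ht : ∀ z ∈ y :: t, 0 < z := fun z hz => h z (List.mem_cons_of_mem _ hz)
          have h1 := ih (by simp) ht
          obtain ⟨hp1, hp2⟩ := Pm_pos' (y :: t) (by simp) ht
          have hp1' : (Pm (y :: t) 0 0 : ℚ) ≠ 0 := by exact_mod_cast hp1.ne'
          have hp2' : (Pm (y :: t) 1 0 : ℚ) ≠ 0 := by exact_mod_cast hp2.ne'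
          show (x : ℚ) + (cf (y :: t))⁻¹ = _
          have e1 : Pm (x :: y :: t) 0 0 = x * Pm (y :: t) 0 0 + Pm (y :: t) 1 0 := by
            rw [Pm_cons, Mm_mul_00]
          have e2 : Pm (x :: y :: t) 1 0 = Pm (y :: t) 0 0 := by
            rw [Pm_cons, Mm_mul_10]
          rw [h1, e1, e2]
          push_cast
          field_simp

theorem crosscap_stmt4 (p q n : ℕ) (a : ℕ → ℤ) (hq : 0 < q) (hqp : q < p)
    (hcop : Nat.Coprime p q) (hn : 1 ≤ n)
    (hpos : ∀ i, 1 ≤ i → i ≤ n → 0 < a i) (hlast : 1 < a n)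
    (hcf : cf (List.ofFn fun i : Fin n => a (i+1)) = (p : ℚ) / q) :
    cf ((List.ofFn fun i : Fin (n-1) => a (i+1)) ++ [a n - 1, a n + 1] ++
        (List.ofFn fun i : Fin (n-1) => a (i+1)).reverse)
      = (p:ℚ)^2 / ((p:ℚ) * q + (-1)^(n-1)) := by
  obtain ⟨m, rfl⟩ : ∃ m, n = m + 1 := ⟨n - 1, (Nat.succ_pred_eq_of_pos hn).symm⟩
  set b := a (m + 1) with hb
  set l' : List ℤ := List.ofFn fun i : Fin m => a (i + 1) with hl'
  -- the list for p/q
  have hL : (List.ofFn fun i : Fin (m + 1) => a (i + 1)) = l' ++ [b] := by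
    rw [List.ofFn_succ']
    simp [hl', List.concat_eq_append]
    exact hb.symm
  have hl'mem : ∀ x ∈ l', 0 < x := by
    intro x hx
    rw [hl', List.mem_ofFn] at hx
    obtain ⟨i, rfl⟩ := hx
    exact hpos _ (by omega) (by omega)
  have hl'len : l'.length = m := by simp [hl']
  set A := Pm l' with hA
  have hdet : A 0 0 * A 1 1 - A 0 1 * A 1 0 = (-1) ^ m := by
    have := Pm_det l'
    rwa [Matrix.det_fin_two, hl'len] at this
  -- entries of Pm (l' ++ [b])
  have hPL : Pm (l' ++ [b]) = A * Mm b := by rw [Pm_append, Pm_singleton]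
  have hx00 : Pm (l' ++ [b]) 0 0 = A 0 0 * b + A 0 1 := by
    rw [hPL]; simp [Matrix.mul_apply, Fin.sum_univ_two, Mm]
  have hx10 : Pm (l' ++ [b]) 1 0 = A 1 0 * b + A 1 1 := by
    rw [hPL]; simp [Matrix.mul_apply, Fin.sum_univ_two, Mm]
  set x := A 0 0 * b + A 0 1 with hxdef
  set y := A 1 0 * b + A 1 1 with hydef
  have hLpos : ∀ z ∈ l' ++ [b], 0 < z := by
    intro z hz
    rcases List.mem_append.mp hz with h | h
    · exact hl'mem z h
    · simp at h; subst h; omega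
  have hLne : l' ++ [b] ≠ [] := by simp
  obtain ⟨hx0, hy0⟩ := Pm_pos' _ hLne hLpos
  rw [hx00] at hx0
  rw [hx10] at hy0
  -- identify x = p, y = q
  have hdetL : Pm (l' ++ [b]) 0 0 * Pm (l' ++ [b]) 1 1
      - Pm (l' ++ [b]) 0 1 * Pm (l' ++ [b]) 1 0 = (-1) ^ (m + 1) := by
    have := Pm_det (l' ++ [b])
    rwa [Matrix.det_fin_two, List.length_append, hl'len] at this
  have hsq : ((-1 : ℤ) ^ (m + 1)) * ((-1) ^ (m + 1)) = 1 := by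
    rw [← pow_add, ← two_mul, pow_mul]; norm_num
  have hcopxy : IsCoprime x y := by
    refine ⟨(-1) ^ (m + 1) * Pm (l' ++ [b]) 1 1,
      -((-1) ^ (m + 1) * Pm (l' ++ [b]) 0 1), ?_⟩
    rw [← hx00, ← hx10]
    linear_combination ((-1 : ℤ) ^ (m + 1)) * hdetL + hsq
  have hq0 : ((q : ℤ) : ℚ) ≠ 0 := by exact_mod_cast hq.ne'
  have hy0' : ((y : ℤ) : ℚ) ≠ 0 := by exact_mod_cast hy0.ne'
  have hcross : x * q = p * y := by
    rw [hL, cf_eq_s4 _ hLne hLpos, hx00, hx10] at hcf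
    have := (div_eq_div_iff hy0' (by exact_mod_cast hq0)).mp hcf
    exact_mod_cast this
  have hcoppq : IsCoprime (p : ℤ) (q : ℤ) := Nat.isCoprime_iff_coprime.mpr hcop
  have hp0 : (0 : ℤ) < p := by exact_mod_cast hq.trans hqp
  have hxp : x = p := by
    have h1 : x ∣ (p : ℤ) := hcopxy.dvd_of_dvd_mul_right ⟨q, hcross.symm ▸ by ring⟩
    have h2 : (p : ℤ) ∣ x := hcoppq.dvd_of_dvd_mul_right ⟨y, by linarith [hcross]⟩
    exact Int.dvd_antisymm hx0.le hp0.le h1 h2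
  have hyq : y = q := by
    have : (p : ℤ) * y = p * q := by rw [← hcross, hxp]
    exact mul_left_cancel₀ hp0.ne' this
  -- the big list
  set B : List ℤ := l' ++ [b - 1, b + 1] ++ l'.reverse with hB
  have hBpos : ∀ z ∈ B, 0 < z := by
    intro z hz
    rw [hB] at hz
    rcases List.mem_append.mp hz with h | h
    · rcases List.mem_append.mp h with h' | h'
      · exact hl'mem z h'
      · simp at h'; rcases h' with rfl | rfl <;> omega
    · exact hl'mem z (List.mem_reverse.mp h)
  have hBne : B ≠ [] := by simp [hB]
  have hPB : Pm B = A * (Mm (b - 1) * (Mm (b + 1) * 1)) * Aᵀ := by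
    rw [hB, Pm_append, Pm_append, Pm_reverse, ← hA, Pm_cons, Pm_cons, Pm_nil]
  have e1 : Pm B 0 0 = (p : ℤ) ^ 2 := by
    rw [hPB]
    simp only [Matrix.mul_apply, Fin.sum_univ_two, Mm, Matrix.transpose_apply,
      Matrix.one_apply, Matrix.cons_val', Matrix.cons_val_zero, Matrix.cons_val_one,
      Matrix.head_cons, Matrix.head_fin_const, Matrix.empty_val',
      Matrix.cons_val_fin_one]
    norm_num
    linear_combination (A 0 0 * b + A 0 1 + (p : ℤ)) * hxp
  have e2 : Pm B 1 0 = (p : ℤ) * q + (-1) ^ m := by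
    rw [hPB]
    simp only [Matrix.mul_apply, Fin.sum_univ_two, Mm, Matrix.transpose_apply,
      Matrix.one_apply, Matrix.cons_val', Matrix.cons_val_zero, Matrix.cons_val_one,
      Matrix.head_cons, Matrix.head_fin_const, Matrix.empty_val',
      Matrix.cons_val_fin_one]
    norm_num
    linear_combination (A 1 0 * b + A 1 1) * hxp + (p : ℤ) * hyq + hdet
  show cf B = (p : ℚ) ^ 2 / ((p : ℚ) * (q : ℚ) + (-1) ^ m)
  rw [cf_eq_s4 _ hBne hBpos, e1, e2]
  push_cast
  ring
end

section
/- Let p, q be coprime positive integers with pq odd and p > q. Define (p,q) to be of type A if the unique solution x of xq ≡ -1 (mod p) with 0 < x < p is even, and of type B if it is odd. Let q/p = [a_0, ..., a_n] be the continued fraction expansion (a_0 = 0, a_i > 0, a_n > 1) with convergents q_i/p_i. Then: if n is even, (p,q) is of type A if and only if p_{n-1} is even; if n is odd, (p,q) is of type A if and only if p_{n-1} is odd. -/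
theorem crosscap_stmt7 (p q n : ℕ) (a P Q : ℕ → ℤ)
    (hq : 0 < q) (hqp : q < p) (hcop : Nat.Coprime p q) (hpodd : Odd p) (hqodd : Odd q)
    (h0 : a 0 = 0) (hpos : ∀ i, 1 ≤ i → i ≤ n → 0 < a i) (hlast : 1 < a n)
    (hcf : cf (List.ofFn fun i : Fin (n+1) => a i) = (q : ℚ) / p)
    (hP0 : P 0 = 1) (hP1 : P 1 = a 1) (hPr : ∀ i, P (i+2) = a (i+2) * P (i+1) + P i)
    (hQ0 : Q 0 = 0) (hQ1 : Q 1 = 1) (hQr : ∀ i, Q (i+2) = a (i+2) * Q (i+1) + Q i)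
    (hPn : P n = p) (hQn : Q n = q) :
    ∀ x : ℤ, 0 < x → x < p → (p : ℤ) ∣ x * q + 1 →
      (Even n → (Even x ↔ Even (P (n-1)))) ∧
      (Odd n → (Even x ↔ Odd (P (n-1)))) := by
  have hp : 0 < p := lt_trans hq hqp
  -- n ≥ 1
  have hn1 : 1 ≤ n := by
    by_contra h
    have hn0 : n = 0 := by omega
    subst hn0
    simp [List.ofFn_succ, cf, h0] at hcf
    have hq' : (q:ℚ) ≠ 0 := Nat.cast_ne_zero.mpr hq.ne'
    have hp' : (p:ℚ) ≠ 0 := Nat.cast_ne_zero.mpr hp.ne'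
    exact (div_ne_zero hq' hp') hcf.symm
  -- positivity of P
  have hPpos : ∀ i, i ≤ n → 0 < P i := by
    intro i
    induction i using Nat.twoStepInduction with
    | zero => intro _; rw [hP0]; norm_num
    | one => intro h; rw [hP1]; exact hpos 1 le_rfl h
    | more k ih1 ih2 =>
      intro h
      rw [hPr k]
      have h1 := ih1 (by omega)
      have h2 := ih2 (by omega)
      have h3 := hpos (k+2) (by omega) h
      nlinarith
  -- determinant identity
  have hD : ∀ i, Q (i+1) * P i - Q i * P (i+1) = (-1)^i := by
    intro i
    induction i with
    | zero => simp [hQ1, hP0, hQ0]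
    | succ k ih =>
      rw [hPr k, hQr k, pow_succ]
      linear_combination (-1 : ℤ) * ih
  obtain ⟨m, rfl⟩ : ∃ m, n = m + 1 := ⟨n - 1, by omega⟩
  have hkey : (q : ℤ) * P m - Q m * p = (-1)^m := by
    have := hD m
    rw [hQn, hPn] at this
    linarith
  have hPmpos : 0 < P m := hPpos m (by omega)
  have hPmlt : P m < p := by
    rw [← hPn]
    match m with
    | 0 => rw [hP0, hP1]; exact hlast
    | k + 1 =>
      rw [hPr k]
      have h1 := hPpos k (by omega)
      have h2 := hPpos (k+1) (by omega)
      nlinarith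
  have hcopz : IsCoprime (p : ℤ) (q : ℤ) := by
    rw [Int.isCoprime_iff_gcd_eq_one]
    exact_mod_cast hcop
  have hpoddz : (p : ℤ) % 2 = 1 := by
    have : Odd (p : ℤ) := by exact_mod_cast hpodd
    exact Int.odd_iff.mp this
  simp only [Nat.add_sub_cancel]
  intro x hx0 hxp hdvd
  constructor
  · -- n even, m odd: q * P m ≡ -1 mod p, x = P m
    intro hne
    have hmodd : Odd m := by
      rcases Nat.even_or_odd m with h | h
      · exact absurd hne (by simp [Nat.even_add_one, h, Nat.not_even_iff_odd, Nat.odd_add_one])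
      · exact h
    have hsign : ((-1:ℤ))^m = -1 := hmodd.neg_one_pow
    rw [hsign] at hkey
    -- p ∣ (x - P m) * q
    have hd2 : (p:ℤ) ∣ (x - P m) * q := by
      obtain ⟨c, hc⟩ := hdvd
      exact ⟨c - Q m, by linear_combination hc - hkey⟩
    have hd3 : (p:ℤ) ∣ x - P m := hcopz.dvd_of_dvd_mul_right hd2
    have hx : x = P m := by
      have := Int.eq_zero_of_abs_lt_dvd hd3 (by rw [abs_lt]; omega)
      omega
    rw [hx]
  · -- n odd, m even: q * P m ≡ 1 mod p, x = p - P m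
    intro hno
    have hmeven : Even m := by
      rcases Nat.even_or_odd m with h | h
      · exact h
      · exact absurd hno (by simp [Nat.odd_add_one, Nat.not_even_iff_odd.mpr h])
    have hsign : ((-1:ℤ))^m = 1 := hmeven.neg_one_pow
    rw [hsign] at hkey
    have hd2 : (p:ℤ) ∣ (x + P m) * q := by
      obtain ⟨c, hc⟩ := hdvd
      exact ⟨c + Q m, by linear_combination hc + hkey⟩
    have hd3 : (p:ℤ) ∣ x + P m := hcopz.dvd_of_dvd_mul_right hd2
    have hx : x = p - P m := by
      have h1 : (p:ℤ) ≤ x + P m := Int.le_of_dvd (by linarith) hd3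
      have hd4 : (p:ℤ) ∣ x + P m - p := hd3.sub ⟨1, by ring⟩
      have := Int.eq_zero_of_abs_lt_dvd hd4 (by rw [abs_lt]; constructor <;> linarith)
      linarith
    rw [Int.even_iff, Int.odd_iff, hx]
    omega
end
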